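/- arXiv:2404.10448 — 2 statements merged into one kernel-verified Lean document; each statement's English description precedes it below -/
import Mathlib

section
/- Let f : ℝ → ℝ be a nonnegative integrable even function (a probability density of a symmetric distribution) satisfying: f(1) > 0, sup_{x ≥ 1} f(x) ≤ f(1) ≤ inf_{0 ≤ x ≤ 1} f(x), and there exist constants 0 < c₁ < c₂ < 1 and b > 0 with inf_{c₁ ≤ x ≤ c₂} f(x) ≥ (1 + b) f(1). Then ∫_{-∞}^{∞} (1 - x²)/(1 + x²)² · f(x) dx > 0. -/
open MeasureTheory Set Filter

noncomputable def psiFn : ℝ → ℝ := fun x => (1 - x ^ 2) / (1 + x ^ 2) ^ 2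

noncomputable def PsiFn : ℝ → ℝ := fun x => x / (1 + x ^ 2)

lemma one_add_sq_pos (x : ℝ) : (0:ℝ) < 1 + x ^ 2 := by positivity

lemma psiFn_cont : Continuous psiFn := by
  apply Continuous.div (by continuity) (by continuity)
  intro x
  have := one_add_sq_pos x
  positivity

lemma hasDerivAt_PsiFn (x : ℝ) : HasDerivAt PsiFn (psiFn x) x := by
  have h : (1 + x ^ 2) ≠ 0 := (one_add_sq_pos x).ne'
  have hd : HasDerivAt (fun y : ℝ => 1 + y ^ 2) (2 * x) x := by
    simpa using ((hasDerivAt_pow 2 x).const_add 1)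
  have := (hasDerivAt_id x).div hd h
  refine this.congr_deriv ?_
  unfold psiFn id
  field_simp
  ring

lemma psiFn_abs_le (x : ℝ) : |psiFn x| ≤ (1 + x ^ 2)⁻¹ := by
  have h1 : (0:ℝ) < 1 + x ^ 2 := one_add_sq_pos x
  have h2 : |1 - x ^ 2| ≤ 1 + x ^ 2 := by
    rw [abs_le]; constructor <;> nlinarith [sq_nonneg x]
  have h3 : |psiFn x| = |1 - x ^ 2| / (1 + x ^ 2) ^ 2 := by
    unfold psiFn
    rw [abs_div, abs_of_pos (show (0:ℝ) < (1 + x ^ 2) ^ 2 by positivity)]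
  rw [h3, div_le_iff₀ (by positivity)]
  calc |1 - x ^ 2| ≤ 1 + x ^ 2 := h2
    _ = (1 + x ^ 2)⁻¹ * (1 + x ^ 2) ^ 2 := by field_simp

lemma psiFn_integrable : Integrable psiFn := by
  refine (integrable_inv_one_add_sq).mono psiFn_cont.aestronglyMeasurable ?_
  filter_upwards with x
  have h1 : (0:ℝ) < 1 + x ^ 2 := one_add_sq_pos x
  rw [Real.norm_eq_abs, Real.norm_eq_abs,
    abs_of_pos (show (0:ℝ) < (1 + x ^ 2)⁻¹ by positivity)]
  exact psiFn_abs_le x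

lemma int_Ioc_psi {a b : ℝ} (hab : a ≤ b) :
    ∫ x in Set.Ioc a b, psiFn x = PsiFn b - PsiFn a := by
  rw [← intervalIntegral.integral_of_le hab]
  exact intervalIntegral.integral_eq_sub_of_hasDerivAt
    (fun x _ => hasDerivAt_PsiFn x) (psiFn_cont.intervalIntegrable a b)

lemma PsiFn_tendsto : Filter.Tendsto PsiFn Filter.atTop (nhds 0) := by
  have h1 : Tendsto (fun x : ℝ => x⁻¹) atTop (nhds 0) := tendsto_inv_atTop_zero
  apply tendsto_of_tendsto_of_tendsto_of_le_of_le' tendsto_const_nhds h1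
  · filter_upwards [eventually_gt_atTop (0:ℝ)] with x hx
    unfold PsiFn; positivity
  · filter_upwards [eventually_gt_atTop (0:ℝ)] with x hx
    unfold PsiFn
    rw [div_le_iff₀ (one_add_sq_pos x), inv_mul_eq_div, le_div_iff₀ hx]
    nlinarith

lemma int_Ioi_psi : ∫ x in Set.Ioi (1:ℝ), psiFn x = -(1/2) := by
  have := MeasureTheory.integral_Ioi_of_hasDerivAt_of_tendsto
    (f := PsiFn) (f' := psiFn) (a := 1) (m := 0)
    ((hasDerivAt_PsiFn 1).continuousAt.continuousWithinAt)
    (fun x _ => hasDerivAt_PsiFn x)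
    (psiFn_integrable.integrableOn) PsiFn_tendsto
  rw [this]
  norm_num [PsiFn]

theorem psi_density_integral_pos
    (f : ℝ → ℝ) (hf_nonneg : ∀ x, 0 ≤ f x) (hf_int : Integrable f)
    (hf_even : ∀ x, f (-x) = f x)
    (hf1 : 0 < f 1)
    (h_sup : ∀ x, 1 ≤ x → f x ≤ f 1)
    (h_inf : ∀ x, 0 ≤ x → x ≤ 1 → f 1 ≤ f x)
    (c₁ c₂ b : ℝ) (hc₁ : 0 < c₁) (hc₁₂ : c₁ < c₂) (hc₂ : c₂ < 1) (hb : 0 < b)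
    (h_bump : ∀ x, c₁ ≤ x → x ≤ c₂ → (1 + b) * f 1 ≤ f x) :
    0 < ∫ x : ℝ, (1 - x ^ 2) / (1 + x ^ 2) ^ 2 * f x := by
  have hgoal : (∫ x : ℝ, (1 - x ^ 2) / (1 + x ^ 2) ^ 2 * f x)
      = ∫ x : ℝ, psiFn x * f x := rfl
  rw [hgoal]
  have hg_int : Integrable (fun x => psiFn x * f x) := by
    refine hf_int.mono (psiFn_cont.aestronglyMeasurable.mul hf_int.aestronglyMeasurable) ?_
    filter_upwards with x
    rw [Real.norm_eq_abs, Real.norm_eq_abs]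
    have h0 : |psiFn x * f x| = |psiFn x| * |f x| := abs_mul _ _
    rw [h0]
    have h1 : |psiFn x| ≤ 1 := le_trans (psiFn_abs_le x) (by
      rw [inv_le_one_iff₀]; right; nlinarith [sq_nonneg x])
    calc |psiFn x| * |f x| ≤ 1 * |f x| :=
          mul_le_mul_of_nonneg_right h1 (abs_nonneg _)
      _ = |f x| := one_mul _
  have hg_even : ∀ x, psiFn (-x) * f (-x) = psiFn x * f x := by
    intro x
    rw [hf_even]
    unfold psiFn
    norm_num
  -- reduce to Ioi 0
  have hsplit : ∫ x : ℝ, psiFn x * f x = 2 * ∫ x in Ioi (0:ℝ), psiFn x * f x := by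
    have h1 := integral_comp_neg_Iic (0:ℝ) (fun x => psiFn x * f x)
    rw [neg_zero] at h1
    simp_rw [hg_even] at h1
    rw [← integral_add_compl (measurableSet_Iic (a := (0:ℝ))) hg_int, compl_Iic, h1]
    ring
  -- psi sign facts
  have hpsi_nn : ∀ x : ℝ, x ^ 2 ≤ 1 → 0 ≤ psiFn x := by
    intro x hx
    unfold psiFn
    apply div_nonneg (by linarith) (by positivity)
  have hpsi_np : ∀ x : ℝ, 1 ≤ x ^ 2 → psiFn x ≤ 0 := by
    intro x hx
    unfold psiFn
    apply div_nonpos_of_nonpos_of_nonneg (by linarith) (by positivity)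
  -- generic lower bound
  have hmono : ∀ (s : Set ℝ) (c : ℝ), MeasurableSet s →
      (∀ x ∈ s, c * psiFn x ≤ psiFn x * f x) →
      c * ∫ x in s, psiFn x ≤ ∫ x in s, psiFn x * f x := by
    intro s c hs hpt
    calc c * ∫ x in s, psiFn x = ∫ x in s, c • psiFn x := (integral_smul c _).symm
      _ ≤ ∫ x in s, psiFn x * f x := setIntegral_mono_on
          (psiFn_integrable.integrableOn.smul c)
          hg_int.integrableOn hs (fun x hx => by simpa [smul_eq_mul] using hpt x hx)
  have hc₂0 : (0:ℝ) < c₂ := hc₁.trans hc₁₂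
  -- piece 1 : Ioc 0 c₁
  have h1 : f 1 * ∫ x in Ioc (0:ℝ) c₁, psiFn x ≤ ∫ x in Ioc (0:ℝ) c₁, psiFn x * f x := by
    refine hmono _ _ measurableSet_Ioc ?_
    intro x hx
    have hx1 : x ≤ 1 := le_trans hx.2 (by linarith)
    have hψ : 0 ≤ psiFn x := hpsi_nn x (by nlinarith [hx.1.le])
    have hfx : f 1 ≤ f x := h_inf x hx.1.le hx1
    calc f 1 * psiFn x = psiFn x * f 1 := mul_comm _ _
      _ ≤ psiFn x * f x := mul_le_mul_of_nonneg_left hfx hψ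
  -- piece 2 : Ioc c₁ c₂
  have h2 : ((1 + b) * f 1) * ∫ x in Ioc c₁ c₂, psiFn x ≤ ∫ x in Ioc c₁ c₂, psiFn x * f x := by
    refine hmono _ _ measurableSet_Ioc ?_
    intro x hx
    have hx0 : 0 < x := hc₁.trans hx.1
    have hx1 : x ≤ 1 := le_trans hx.2 (by linarith)
    have hψ : 0 ≤ psiFn x := hpsi_nn x (by nlinarith [hx0.le])
    have hfx : (1 + b) * f 1 ≤ f x := h_bump x hx.1.le hx.2
    calc (1 + b) * f 1 * psiFn x = psiFn x * ((1 + b) * f 1) := mul_comm _ _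
      _ ≤ psiFn x * f x := mul_le_mul_of_nonneg_left hfx hψ
  -- piece 3 : Ioc c₂ 1
  have h3 : f 1 * ∫ x in Ioc c₂ (1:ℝ), psiFn x ≤ ∫ x in Ioc c₂ (1:ℝ), psiFn x * f x := by
    refine hmono _ _ measurableSet_Ioc ?_
    intro x hx
    have hx0 : 0 < x := hc₂0.trans hx.1
    have hψ : 0 ≤ psiFn x := hpsi_nn x (by nlinarith [hx0.le, hx.2])
    have hfx : f 1 ≤ f x := h_inf x hx0.le hx.2
    calc f 1 * psiFn x = psiFn x * f 1 := mul_comm _ _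
      _ ≤ psiFn x * f x := mul_le_mul_of_nonneg_left hfx hψ
  -- piece 4 : Ioi 1
  have h4 : f 1 * ∫ x in Ioi (1:ℝ), psiFn x ≤ ∫ x in Ioi (1:ℝ), psiFn x * f x := by
    refine hmono _ _ measurableSet_Ioi ?_
    intro x hx
    have hx1 : (1:ℝ) ≤ x := le_of_lt hx
    have hψ : psiFn x ≤ 0 := hpsi_np x (by nlinarith)
    have hfx : f x ≤ f 1 := h_sup x hx1
    calc f 1 * psiFn x = psiFn x * f 1 := mul_comm _ _
      _ ≤ psiFn x * f x := mul_le_mul_of_nonpos_left hfx hψ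
  -- decomposition of Ioi 0
  have hdecomp : ∫ x in Ioi (0:ℝ), psiFn x * f x
      = (∫ x in Ioc (0:ℝ) c₁, psiFn x * f x) + (∫ x in Ioc c₁ c₂, psiFn x * f x)
        + (∫ x in Ioc c₂ (1:ℝ), psiFn x * f x) + ∫ x in Ioi (1:ℝ), psiFn x * f x := by
    have e1 : Ioc (0:ℝ) c₁ ∪ Ioc c₁ c₂ = Ioc (0:ℝ) c₂ :=
      Ioc_union_Ioc_eq_Ioc hc₁.le hc₁₂.le
    have e2 : Ioc (0:ℝ) c₂ ∪ Ioc c₂ 1 = Ioc (0:ℝ) 1 :=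
      Ioc_union_Ioc_eq_Ioc hc₂0.le hc₂.le
    have e3 : Ioc (0:ℝ) 1 ∪ Ioi 1 = Ioi (0:ℝ) := Ioc_union_Ioi_eq_Ioi zero_le_one
    rw [← e3, setIntegral_union (Ioc_disjoint_Ioi le_rfl) measurableSet_Ioi
      hg_int.integrableOn hg_int.integrableOn,
      ← e2, setIntegral_union (Ioc_disjoint_Ioc_of_le le_rfl) measurableSet_Ioc
      hg_int.integrableOn hg_int.integrableOn,
      ← e1, setIntegral_union (Ioc_disjoint_Ioc_of_le le_rfl) measurableSet_Ioc
      hg_int.integrableOn hg_int.integrableOn]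
  -- exact psi integrals
  have i1 : ∫ x in Ioc (0:ℝ) c₁, psiFn x = PsiFn c₁ - PsiFn 0 := int_Ioc_psi hc₁.le
  have i2 : ∫ x in Ioc c₁ c₂, psiFn x = PsiFn c₂ - PsiFn c₁ := int_Ioc_psi hc₁₂.le
  have i3 : ∫ x in Ioc c₂ (1:ℝ), psiFn x = PsiFn 1 - PsiFn c₂ := int_Ioc_psi hc₂.le
  have i4 : ∫ x in Ioi (1:ℝ), psiFn x = -(1/2) := int_Ioi_psi
  have hP0 : PsiFn 0 = 0 := by norm_num [PsiFn]
  have hP1 : PsiFn (1:ℝ) = 1/2 := by norm_num [PsiFn]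
  have hPlt : PsiFn c₁ < PsiFn c₂ := by
    unfold PsiFn
    rw [div_lt_div_iff₀ (one_add_sq_pos c₁) (one_add_sq_pos c₂)]
    have h12 : c₁ * c₂ < 1 := by nlinarith
    nlinarith [mul_pos (sub_pos.2 hc₁₂) (sub_pos.2 h12)]
  rw [i1, hP0] at h1
  rw [i2] at h2
  rw [i3, hP1] at h3
  rw [i4] at h4
  -- combine
  have hsum : b * f 1 * (PsiFn c₂ - PsiFn c₁) ≤ ∫ x in Ioi (0:ℝ), psiFn x * f x := by
    rw [hdecomp]
    nlinarith [h1, h2, h3, h4]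
  have hpos : 0 < b * f 1 * (PsiFn c₂ - PsiFn c₁) :=
    mul_pos (mul_pos hb hf1) (sub_pos.2 hPlt)
  rw [hsplit]
  linarith
end

section
/- If a random variable S has a density f which is even, bounded, continuous, strictly decreasing on [0,∞), and positive at 1, then E[(1 - S²)/(1 + S²)²] > 0. -/
open MeasureTheory Filter

theorem psi_expectation_pos_of_decreasing_density
    (f : ℝ → ℝ) (hf_nonneg : ∀ x, 0 ≤ f x)
    (hf_density : ∫ x : ℝ, f x = 1) (hf_int : Integrable f)
    (hf_even : ∀ x, f (-x) = f x)
    (hf_bdd : ∃ M : ℝ, ∀ x, f x ≤ M)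
    (hf_cont : Continuous f)
    (hf_anti : StrictAntiOn f (Set.Ici (0 : ℝ)))
    (hf1 : 0 < f 1) :
    0 < ∫ x : ℝ, (1 - x ^ 2) / (1 + x ^ 2) ^ 2 * f x := by
  set g : ℝ → ℝ := fun x => (1 - x ^ 2) / (1 + x ^ 2) ^ 2 with hg_def
  have hden : ∀ x : ℝ, (0:ℝ) < 1 + x ^ 2 := fun x => by positivity
  have hg_cont : Continuous g := by
    apply Continuous.div (by continuity) (by continuity)
    intro x; positivity
  -- |g x| ≤ (1+x^2)⁻¹ ≤ 1
  have hg_bound : ∀ x : ℝ, |g x| ≤ (1 + x ^ 2)⁻¹ := by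
    intro x
    have h1 : |1 - x ^ 2| ≤ 1 + x ^ 2 := by
      rw [abs_le]; constructor <;> nlinarith [sq_nonneg x]
    have h2 : (0:ℝ) < (1 + x ^ 2) ^ 2 := by positivity
    rw [hg_def, abs_div, abs_of_pos h2, div_le_iff₀ h2]
    rw [inv_mul_eq_div, le_div_iff₀ (hden x)]
    calc |1 - x ^ 2| * (1 + x ^ 2) ≤ (1 + x ^ 2) * (1 + x ^ 2) := by
          exact mul_le_mul_of_nonneg_right h1 (hden x).le
      _ = (1 + x ^ 2) ^ 2 := by ring
  have hg_int : Integrable g := by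
    refine integrable_inv_one_add_sq.mono' hg_cont.aestronglyMeasurable ?_
    filter_upwards with x
    simpa [Real.norm_eq_abs] using hg_bound x
  have hg_le_one : ∀ x : ℝ, ‖g x‖ ≤ 1 := by
    intro x
    refine (hg_bound x).trans ?_
    rw [inv_le_one₀ (hden x)]
    nlinarith [sq_nonneg x]
  have hgf_int : Integrable (fun x => g x * f x) :=
    hf_int.bdd_mul hg_cont.aestronglyMeasurable (ae_of_all _ hg_le_one)
  -- ∫ g = 0
  have hF : ∀ x : ℝ, HasDerivAt (fun y : ℝ => y / (1 + y ^ 2)) (g x) x := by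
    intro x
    have h1 : HasDerivAt (fun y : ℝ => y) 1 x := hasDerivAt_id x
    have h2 : HasDerivAt (fun y : ℝ => 1 + y ^ 2) (2 * x) x := by
      simpa using ((hasDerivAt_pow 2 x).const_add 1)
    have := h1.div h2 (hden x).ne'
    refine HasDerivAt.congr_deriv (f := fun y : ℝ => y / (1 + y ^ 2)) this ?_
    rw [hg_def]
    field_simp
    ring
  have htop : Tendsto (fun x : ℝ => x / (1 + x ^ 2)) atTop (nhds 0) := by
    have h1 : Tendsto (fun x : ℝ => x⁻¹) atTop (nhds 0) := tendsto_inv_atTop_zero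
    refine tendsto_of_tendsto_of_tendsto_of_le_of_le' tendsto_const_nhds h1 ?_ ?_
    · filter_upwards [eventually_ge_atTop (0:ℝ)] with x hx
      positivity
    · filter_upwards [eventually_ge_atTop (1:ℝ)] with x hx
      rw [div_le_iff₀ (hden x), inv_mul_eq_div, le_div_iff₀ (by linarith : (0:ℝ) < x)]
      nlinarith
  have hbot : Tendsto (fun x : ℝ => x / (1 + x ^ 2)) atBot (nhds 0) := by
    have := (htop.comp tendsto_neg_atBot_atTop).neg
    simp only [Function.comp_def, neg_neg, neg_zero] at this
    convert this using 2 with x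
    ring
  have hg_zero : ∫ x : ℝ, g x = 0 := by
    have := integral_of_hasDerivAt_of_tendsto hF hg_int hbot htop
    simpa using this
  -- f x = f |x|
  have hf_abs : ∀ x : ℝ, f x = f |x| := by
    intro x
    rcases le_or_gt 0 x with h | h
    · rw [abs_of_nonneg h]
    · rw [abs_of_neg h, ← hf_even]
  -- h := g * (f - f 1) is nonneg
  set h : ℝ → ℝ := fun x => g x * (f x - f 1) with hh_def
  have hh_nonneg : ∀ x : ℝ, 0 ≤ h x := by
    intro x
    show 0 ≤ g x * (f x - f 1)
    rcases le_or_gt (x ^ 2) 1 with hx | hx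
    · have hxabs : |x| ≤ 1 := abs_le.2 ⟨by nlinarith, by nlinarith⟩
      have hfx : f 1 ≤ f x := by
        rw [hf_abs x]
        exact hf_anti.antitoneOn (abs_nonneg x) (by norm_num) hxabs
      have hgx : 0 ≤ g x := by
        rw [hg_def]
        apply div_nonneg (by linarith) (by positivity)
      exact mul_nonneg hgx (by linarith)
    · have hxabs : 1 ≤ |x| := by
        nlinarith [abs_nonneg x, sq_abs x]
      have hfx : f x ≤ f 1 := by
        rw [hf_abs x]
        exact hf_anti.antitoneOn (by norm_num) (by positivity : (0:ℝ) ≤ |x|) hxabs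
      have hgx : g x ≤ 0 := by
        rw [hg_def]
        apply div_nonpos_of_nonpos_of_nonneg (by linarith) (by positivity)
      nlinarith [mul_nonneg (neg_nonneg.2 hgx) (sub_nonneg.2 hfx)]
  have hh_cont : Continuous h := hg_cont.mul (hf_cont.sub continuous_const)
  have hh_int : Integrable h := by
    have : Integrable (fun x => g x * f x - g x * f 1) :=
      hgf_int.sub (hg_int.mul_const (f 1))
    refine this.congr ?_
    filter_upwards with x
    rw [hh_def]; ring
  have hh0 : 0 < h 0 := by
    have : f 1 < f 0 := hf_anti (by norm_num) (by norm_num) (by norm_num)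
    have hg0 : g 0 = 1 := by norm_num [hg_def]
    rw [hh_def]
    simp only [hg0]
    linarith
  have hsupp : 0 < volume (Function.support h) := by
    have hopen : IsOpen (Function.support h) := by
      have : Function.support h = h ⁻¹' {0}ᶜ := by
        ext x; simp [Function.support]
      rw [this]
      exact (isClosed_singleton.preimage hh_cont).isOpen_compl
    exact hopen.measure_pos volume ⟨0, hh0.ne'⟩
  have hh_pos : 0 < ∫ x : ℝ, h x := by
    rw [integral_pos_iff_support_of_nonneg_ae (ae_of_all _ hh_nonneg) hh_int]
    exact hsupp
  have key : ∫ x : ℝ, h x = ∫ x : ℝ, g x * f x := by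
    have : ∫ x : ℝ, h x = (∫ x : ℝ, g x * f x) - ∫ x : ℝ, g x * f 1 := by
      rw [← integral_sub hgf_int (hg_int.mul_const (f 1))]
      congr 1
      ext x
      rw [hh_def]; ring
    rw [this, integral_mul_const, hg_zero]
    ring
  calc (0:ℝ) < ∫ x : ℝ, h x := hh_pos
    _ = ∫ x : ℝ, g x * f x := key
    _ = ∫ x : ℝ, (1 - x ^ 2) / (1 + x ^ 2) ^ 2 * f x := rfl
end
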